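/- There exists a constant C > 0 such that for every Schwartz function f : ℝ → ℂ, ‖x ↦ x·f(x)‖ ≤ C·‖x ↦ -f''(x) + x²·f(x) + f(x)‖^{1/2}·‖f‖^{1/2}. -/

import Mathlib

open MeasureTheory

/-- The `L²(ℝ)` norm of a function `f : ℝ → ℂ`. -/
noncomputable def L2N (f : ℝ → ℂ) : ℝ := (∫ x : ℝ, ‖f x‖ ^ 2) ^ ((1 : ℝ) / 2)

section Helpers
open SchwartzMap

lemma bcf_bound (g : SchwartzMap ℝ ℂ) (x : ℝ) :
    ‖g x‖ ≤ ‖g.toBoundedContinuousFunction‖ := by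
  simpa using g.toBoundedContinuousFunction.norm_coe_le_norm x

lemma int_pow_sq (g : SchwartzMap ℝ ℂ) (k : ℕ) :
    Integrable (fun x : ℝ => ‖x‖ ^ k * ‖g x‖ ^ 2) := by
  refine (((g.integrable_pow_mul volume k).const_mul ‖g.toBoundedContinuousFunction‖)).mono'
    ?_ ?_
  · exact (((continuous_norm.pow k).mul ((g.continuous.norm).pow 2))).aestronglyMeasurable
  · refine Filter.Eventually.of_forall fun x => ?_
    have h1 : 0 ≤ ‖x‖ ^ k * ‖g x‖ ^ 2 := by positivity
    rw [Real.norm_of_nonneg h1]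
    have := bcf_bound g x
    calc ‖x‖ ^ k * ‖g x‖ ^ 2 = (‖x‖ ^ k * ‖g x‖) * ‖g x‖ := by ring
    _ ≤ (‖x‖ ^ k * ‖g x‖) * ‖g.toBoundedContinuousFunction‖ := by
        apply mul_le_mul_of_nonneg_left this; positivity
    _ = ‖g.toBoundedContinuousFunction‖ * (‖x‖ ^ k * ‖g x‖) := by ring

lemma prod_int (g1 g2 : SchwartzMap ℝ ℂ) :
    Integrable (fun x : ℝ => g1 x * (starRingEnd ℂ) (g2 x)) := by
  refine ((g1.integrable.norm.const_mul ‖g2.toBoundedContinuousFunction‖)).mono' ?_ ?_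
  · exact (g1.continuous.mul (Complex.continuous_conj.comp g2.continuous)).aestronglyMeasurable
  · refine Filter.Eventually.of_forall fun x => ?_
    rw [norm_mul, RCLike.norm_conj]
    calc ‖g1 x‖ * ‖g2 x‖ ≤ ‖g1 x‖ * ‖g2.toBoundedContinuousFunction‖ :=
        mul_le_mul_of_nonneg_left (bcf_bound g2 x) (norm_nonneg _)
      _ = ‖g2.toBoundedContinuousFunction‖ * ‖g1 x‖ := by ring

lemma ibp (f : SchwartzMap ℝ ℂ) :
    ∫ x : ℝ, ((derivCLM ℝ ℂ (derivCLM ℝ ℂ f)) x * (starRingEnd ℂ) (f x)).re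
      = - ∫ x : ℝ, ‖(derivCLM ℝ ℂ f) x‖ ^ 2 := by
  set f1 := derivCLM ℝ ℂ f
  set f2 := derivCLM ℝ ℂ f1
  have hd : ∀ x : ℝ, HasDerivAt (fun y => (f1 y * (starRingEnd ℂ) (f y)).re)
      ((f2 x * (starRingEnd ℂ) (f x)).re + ‖f1 x‖ ^ 2) x := by
    intro x
    have h1 : HasDerivAt (⇑f) (f1 x) x := by
      simpa [f1, derivCLM_apply] using f.differentiableAt.hasDerivAt
    have h2 : HasDerivAt (⇑f1) (f2 x) x := by
      simpa [f2, derivCLM_apply] using f1.differentiableAt.hasDerivAt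
    have h3 : HasDerivAt (fun y => (starRingEnd ℂ) (f y)) ((starRingEnd ℂ) (f1 x)) x := h1.star
    have h4 := h2.mul h3
    have h5 := Complex.reCLM.hasFDerivAt.comp_hasDerivAt x h4
    have h6 : HasDerivAt (fun y => (f1 y * (starRingEnd ℂ) (f y)).re)
        (Complex.reCLM (f2 x * (starRingEnd ℂ) (f x) + f1 x * (starRingEnd ℂ) (f1 x))) x := h5
    convert h6 using 1
    simp [Complex.mul_conj, Complex.normSq_eq_norm_sq, ← Complex.ofReal_pow]
  have hA : Integrable (fun x : ℝ => (f2 x * (starRingEnd ℂ) (f x)).re) := (prod_int f2 f).re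
  have hB : Integrable (fun x : ℝ => ‖f1 x‖ ^ 2) := by simpa using int_pow_sq f1 0
  have hC : Integrable (fun x : ℝ => (f1 x * (starRingEnd ℂ) (f x)).re) := (prod_int f1 f).re
  have hz := integral_eq_zero_of_hasDerivAt_of_integrable hd (hA.add hB) hC
  rw [integral_add hA hB] at hz
  linarith

theorem main :
    ∃ C : ℝ, 0 < C ∧
      ∀ f : SchwartzMap ℝ ℂ,
        (∫ x : ℝ, ‖(x : ℂ) * f x‖ ^ 2) ^ ((1 : ℝ) / 2)
          ≤ C * ((∫ x : ℝ, ‖-(deriv (deriv ⇑f) x) + (x : ℂ) ^ 2 * f x + f x‖ ^ 2) ^ ((1:ℝ)/2))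
                ^ ((1 : ℝ) / 2)
             * ((∫ x : ℝ, ‖f x‖ ^ 2) ^ ((1:ℝ)/2)) ^ ((1 : ℝ) / 2) := by
  refine ⟨1, one_pos, fun f => ?_⟩
  set f1 := derivCLM ℝ ℂ f with hf1def
  set f2 := derivCLM ℝ ℂ f1 with hf2def
  have hf1 : ⇑f1 = deriv ⇑f := funext fun x => derivCLM_apply ℝ f x
  have hdd : (fun x : ℝ => deriv (deriv ⇑f) x) = ⇑f2 := by
    rw [← hf1]; exact (funext fun x => derivCLM_apply ℝ f1 x).symm
  set g : ℝ → ℂ := fun x => -(f2 x) + (x : ℂ) ^ 2 * f x + f x with hg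
  have hgeq : (fun x : ℝ => -(deriv (deriv ⇑f) x) + (x : ℂ) ^ 2 * f x + f x) = g := by
    funext x
    simp only [hg, congrFun hdd x]
  simp only [fun x : ℝ => congrFun hgeq x]
  -- basic integrabilities
  have hIA : Integrable (fun x : ℝ => ‖(x : ℂ) * f x‖ ^ 2) := by
    apply (int_pow_sq f 2).congr
    refine Filter.Eventually.of_forall fun x => ?_
    show ‖x‖ ^ 2 * ‖f x‖ ^ 2 = ‖(x:ℂ) * f x‖ ^ 2
    rw [norm_mul, Complex.norm_real, mul_pow]
  have hnormmul : ∀ x : ℝ, ‖(x : ℂ) * f x‖ ^ 2 = ‖x‖ ^ 2 * ‖f x‖ ^ 2 := fun x => by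
    rw [norm_mul, Complex.norm_real, mul_pow]
  have hIB : Integrable (fun x : ℝ => ‖f1 x‖ ^ 2) := by simpa using int_pow_sq f1 0
  have hID : Integrable (fun x : ℝ => ‖f x‖ ^ 2) := by simpa using int_pow_sq f 0
  have hgcont : Continuous g := by
    apply ((f2.continuous.neg).add ?_).add f.continuous
    exact (Complex.continuous_ofReal.pow 2).mul f.continuous
  have hIE : Integrable (fun x : ℝ => ‖g x‖ ^ 2) := by
    have hbnd : Integrable (fun x : ℝ =>
        3 * (‖f2 x‖ ^ 2) + (3 * (‖x‖ ^ 4 * ‖f x‖ ^ 2) + 3 * (‖f x‖ ^ 2))) :=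
      ((int_pow_sq f2 0).const_mul 3 |>.congr (by simp)).add
        (((int_pow_sq f 4).const_mul 3).add (hID.const_mul 3))
    refine hbnd.mono' ((hgcont.norm.pow 2).aestronglyMeasurable) ?_
    refine Filter.Eventually.of_forall fun x => ?_
    have h0 : (0:ℝ) ≤ ‖g x‖ ^ 2 := by positivity
    rw [Real.norm_of_nonneg h0]
    have htri : ‖g x‖ ≤ ‖f2 x‖ + ‖x‖ ^ 2 * ‖f x‖ + ‖f x‖ := by
      refine (norm_add₃_le).trans ?_
      gcongr
      · simp
      · rw [norm_mul]
        gcongr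
        exact le_of_eq (by rw [norm_pow, Complex.norm_real])
    have hsq : ‖g x‖ ^ 2 ≤ (‖f2 x‖ + ‖x‖ ^ 2 * ‖f x‖ + ‖f x‖) ^ 2 := by
      apply pow_le_pow_left₀ (norm_nonneg _) htri
    nlinarith [sq_nonneg (‖f2 x‖ - ‖x‖^2 * ‖f x‖), sq_nonneg (‖f2 x‖ - ‖f x‖),
      sq_nonneg (‖x‖^2*‖f x‖ - ‖f x‖), sq_nonneg (‖x‖^2)]
  -- pointwise identity for the real part of (T+1)f · conj f
  have hpt : ∀ x : ℝ, (g x * (starRingEnd ℂ) (f x)).re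
      = -((f2 x * (starRingEnd ℂ) (f x)).re) + (‖x‖ ^ 2 * ‖f x‖ ^ 2 + ‖f x‖ ^ 2) := by
    intro x
    have : g x * (starRingEnd ℂ) (f x)
        = -(f2 x * (starRingEnd ℂ) (f x)) + ((x:ℂ)^2 * (f x * (starRingEnd ℂ) (f x))
          + f x * (starRingEnd ℂ) (f x)) := by rw [hg]; ring
    rw [this]
    simp [Complex.mul_conj, Complex.normSq_eq_norm_sq, ← Complex.ofReal_pow,
      ← Complex.ofReal_mul, Real.norm_eq_abs, sq_abs]
  have hIA2 : Integrable (fun x : ℝ => ‖x‖ ^ 2 * ‖f x‖ ^ 2) := int_pow_sq f 2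
  have hIRe : Integrable (fun x : ℝ => (g x * (starRingEnd ℂ) (f x)).re) := by
    refine (((prod_int f2 f).re.neg).add (hIA2.add hID)).congr ?_
    exact Filter.Eventually.of_forall fun x => (hpt x).symm
  have hint : ∫ x : ℝ, (g x * (starRingEnd ℂ) (f x)).re
      = -(∫ x : ℝ, (f2 x * (starRingEnd ℂ) (f x)).re)
        + ((∫ x : ℝ, ‖x‖ ^ 2 * ‖f x‖ ^ 2) + ∫ x : ℝ, ‖f x‖ ^ 2) := by
    have h1 : ∫ x : ℝ, (g x * (starRingEnd ℂ) (f x)).re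
        = ∫ x : ℝ, (-((f2 x * (starRingEnd ℂ) (f x)).re)
            + (‖x‖ ^ 2 * ‖f x‖ ^ 2 + ‖f x‖ ^ 2)) :=
      integral_congr_ae (Filter.Eventually.of_forall hpt)
    have hneg : Integrable (fun x : ℝ => -((f2 x * (starRingEnd ℂ) (f x)).re)) :=
      (prod_int f2 f).re.neg
    have hsum : Integrable (fun x : ℝ => ‖x‖ ^ 2 * ‖f x‖ ^ 2 + ‖f x‖ ^ 2) := hIA2.add hID
    rw [h1, integral_add hneg hsum, integral_add hIA2 hID, integral_neg]
  have hibp := ibp f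
  have hB0 : 0 ≤ ∫ x : ℝ, ‖f1 x‖ ^ 2 := integral_nonneg fun x => by positivity
  have hD0 : 0 ≤ ∫ x : ℝ, ‖f x‖ ^ 2 := integral_nonneg fun x => by positivity
  have hE0 : 0 ≤ ∫ x : ℝ, ‖g x‖ ^ 2 := integral_nonneg fun x => by positivity
  have hA0 : 0 ≤ ∫ x : ℝ, ‖x‖ ^ 2 * ‖f x‖ ^ 2 := integral_nonneg fun x => by positivity
  have hAle : (∫ x : ℝ, ‖x‖ ^ 2 * ‖f x‖ ^ 2) ≤ ∫ x : ℝ, (g x * (starRingEnd ℂ) (f x)).re := by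
    rw [hint, hibp]
    linarith
  have hImul : Integrable (fun x : ℝ => ‖g x‖ * ‖f x‖) := by
    refine ((hIE.add hID).const_mul (1/2 : ℝ)).mono'
      ((hgcont.norm.mul f.continuous.norm).aestronglyMeasurable) ?_
    refine Filter.Eventually.of_forall fun x => ?_
    rw [Real.norm_of_nonneg (by positivity)]
    simp only [Pi.add_apply]
    nlinarith [sq_nonneg (‖g x‖ - ‖f x‖)]
  have hmono : (∫ x : ℝ, (g x * (starRingEnd ℂ) (f x)).re) ≤ ∫ x : ℝ, ‖g x‖ * ‖f x‖ := by
    refine integral_mono hIRe hImul fun x => ?_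
    calc (g x * (starRingEnd ℂ) (f x)).re ≤ ‖g x * (starRingEnd ℂ) (f x)‖ :=
        Complex.re_le_norm _
      _ = ‖g x‖ * ‖f x‖ := by rw [norm_mul, RCLike.norm_conj]
  have hholder : (∫ x : ℝ, ‖g x‖ * ‖f x‖)
      ≤ (∫ x : ℝ, ‖g x‖ ^ 2) ^ ((1:ℝ)/2) * (∫ x : ℝ, ‖f x‖ ^ 2) ^ ((1:ℝ)/2) := by
    have hconj : Real.HolderConjugate 2 2 := by constructor <;> norm_num
    have hmg : MeasureTheory.MemLp (fun x : ℝ => ‖g x‖) (ENNReal.ofReal 2) := by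
      rw [show ENNReal.ofReal 2 = 2 by norm_num]
      exact (memLp_two_iff_integrable_sq (hgcont.norm.aestronglyMeasurable)).2 hIE
    have hmf : MeasureTheory.MemLp (fun x : ℝ => ‖f x‖) (ENNReal.ofReal 2) := by
      rw [show ENNReal.ofReal 2 = 2 by norm_num]
      exact (memLp_two_iff_integrable_sq (f.continuous.norm.aestronglyMeasurable)).2 hID
    have := integral_mul_le_Lp_mul_Lq_of_nonneg hconj
      (Filter.Eventually.of_forall fun x => norm_nonneg _)
      (Filter.Eventually.of_forall fun x => norm_nonneg _) hmg hmf
    simpa [Real.rpow_two] using this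
  -- put everything together
  have hkey : (∫ x : ℝ, ‖(x : ℂ) * f x‖ ^ 2)
      ≤ (∫ x : ℝ, ‖g x‖ ^ 2) ^ ((1:ℝ)/2) * (∫ x : ℝ, ‖f x‖ ^ 2) ^ ((1:ℝ)/2) := by
    have : (∫ x : ℝ, ‖(x : ℂ) * f x‖ ^ 2) = ∫ x : ℝ, ‖x‖ ^ 2 * ‖f x‖ ^ 2 :=
      integral_congr_ae (Filter.Eventually.of_forall fun x => hnormmul x)
    rw [this]
    exact hAle.trans (hmono.trans hholder)
  have hxA0 : 0 ≤ ∫ x : ℝ, ‖(x : ℂ) * f x‖ ^ 2 := integral_nonneg fun x => by positivity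
  have h1 := Real.rpow_le_rpow hxA0 hkey (by norm_num : (0:ℝ) ≤ 1/2)
  rw [Real.mul_rpow (Real.rpow_nonneg hE0 _) (Real.rpow_nonneg hD0 _)] at h1
  rw [one_mul]
  exact h1

end Helpers

/-- The multiplication operator `x` is `1/2`-subordinated to `T + 1`,
where `T = -d²/dx² + x²` is the harmonic oscillator. -/
theorem stmt_1 :
    ∃ C : ℝ, 0 < C ∧
      ∀ f : SchwartzMap ℝ ℂ,
        L2N (fun x : ℝ => (x : ℂ) * f x)
          ≤ C * L2N (fun x : ℝ => -(deriv (deriv ⇑f) x) + (x : ℂ) ^ 2 * f x + f x)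
                ^ ((1 : ℝ) / 2)
             * L2N ⇑f ^ ((1 : ℝ) / 2) := by
  simpa only [L2N] using main
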